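/- Let λ be a nonzero edge l-connected partition such that e_l(λ) is not divisible by l. Then the first part of the l-core of λ equals the first part of λ: core(λ)_1 = λ_1. -/

import Mathlib

noncomputable section

/-- `p : ℕ → ℕ` represents the partition `λ` with `p i = λ_{i+1}` (0-indexed parts):
a weakly decreasing, eventually zero sequence. -/
def IsPartition (p : ℕ → ℕ) : Prop :=
  (∀ i j, i ≤ j → p j ≤ p i) ∧ ∃ N, ∀ i, N ≤ i → p i = 0

/-- `ℓ(λ)`, the number of nonzero parts. -/
def plen (p : ℕ → ℕ) : ℕ := sInf {N | p N = 0}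

/-- the degree (number of boxes) of the partition. -/
def pdeg (p : ℕ → ℕ) : ℕ := ∑ i ∈ Finset.range (plen p), p i

/-- `λ` is `l`-regular: no `l` consecutive parts are equal and nonzero. -/
def IsLRegular (l : ℕ) (p : ℕ → ℕ) : Prop :=
  ∀ i, p i ≠ 0 → p (i + l - 1) ≠ p i

/-- `λ` is `l`-restricted: `λ_i - λ_{i+1} < l` for all `i`. -/
def IsLRestricted (l : ℕ) (p : ℕ → ℕ) : Prop :=
  ∀ i, p i - p (i + 1) < l

/-- the transpose (conjugate) partition. -/
def conjP (p : ℕ → ℕ) : ℕ → ℕ :=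
  fun j => ((Finset.range (plen p)).filter fun i => j < p i).card

/-- the minimal `h ≥ 1` with `λ_1 - λ_{h+1} + h ≥ l`: when `e(λ) > l`, the first
`l`-segment of the `l`-edge lies in rows `1, …, h`. -/
def firstSeg (l : ℕ) (p : ℕ → ℕ) : ℕ := sInf {h | 1 ≤ h ∧ l ≤ p 0 - p h + h}

/-- removal of the `l`-edge (with fuel): if `e(λ) ≤ l` the whole edge is removed,
otherwise the first `l`-segment is removed from rows `1, …, h` (`h = firstSeg`) and one
recurses on `(λ_{h+1}, λ_{h+2}, …)`. -/
def removeLEdgeAux (l : ℕ) : ℕ → (ℕ → ℕ) → ℕ → ℕ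
  | 0, _ => fun _ => 0
  | n + 1, p =>
    if p 0 = 0 then fun _ => 0
    else if p 0 + plen p - 1 ≤ l then fun i => p (i + 1) - 1
    else fun i =>
      if i + 1 < firstSeg l p then p (i + 1) - 1
      else if i + 1 = firstSeg l p then p 0 + firstSeg l p - 1 - l
      else removeLEdgeAux l n (fun j => p (j + firstSeg l p)) (i - firstSeg l p)

/-- the partition obtained by removing the `l`-edge of `λ`. -/
def removeLEdge (l : ℕ) (p : ℕ → ℕ) : ℕ → ℕ := removeLEdgeAux l (plen p) p

/-- `e_l(λ)`, the number of nodes of the `l`-edge. -/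
def elen (l : ℕ) (p : ℕ → ℕ) : ℕ := pdeg p - pdeg (removeLEdge l p)

/-- the length of `Mull(λ)` prescribed by the defining recursion of the Mullineux map. -/
def mullLen (l : ℕ) (p : ℕ → ℕ) : ℕ :=
  if l ∣ elen l p then elen l p - plen p else elen l p - plen p + 1

/-- the Mullineux map (with fuel): `Mull(0) = 0` and, for `λ ≠ 0` `l`-regular with `ν`
obtained from `λ` by removing the `l`-edge, `Mull(λ)` is the unique `l`-regular partition
whose `l`-edge removal leaves `Mull(ν)` and whose length is `e_l(λ) - ℓ(λ)` if
`l ∣ e_l(λ)` and `e_l(λ) - ℓ(λ) + 1` otherwise. -/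
def mullAux (l : ℕ) : ℕ → (ℕ → ℕ) → ℕ → ℕ
  | 0, _ => fun _ => 0
  | n + 1, p =>
    if p 0 = 0 then fun _ => 0
    else
      Classical.epsilon fun μ : ℕ → ℕ =>
        IsPartition μ ∧ IsLRegular l μ ∧
          removeLEdge l μ = mullAux l n (removeLEdge l p) ∧ plen μ = mullLen l p

/-- the Mullineux map. -/
def mull (l : ℕ) (p : ℕ → ℕ) : ℕ → ℕ := mullAux l (pdeg p) p

/-- the list of Mullineux components (with fuel). -/
def mullCompsAux (l : ℕ) : ℕ → (ℕ → ℕ) → List (ℕ → ℕ)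
  | 0, _ => []
  | n + 1, p =>
    if p 0 = 0 then []
    else if elen l p ≤ l then [p]
    else (fun i => if i < firstSeg l p then p i else 0) ::
      mullCompsAux l n (fun j => p (j + firstSeg l p))

/-- the Mullineux components of `λ`. -/
def mullComps (l : ℕ) (p : ℕ → ℕ) : List (ℕ → ℕ) := mullCompsAux l (plen p) p

/-- edge `l`-connectedness (with fuel): consecutive Mullineux components `α, ρ` satisfy
`α_1 - ρ_1 + ℓ(α) = l`. -/
def edgeConnAux (l : ℕ) : ℕ → (ℕ → ℕ) → Prop
  | 0, _ => True
  | n + 1, p =>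
    if elen l p ≤ l then True
    else p 0 + firstSeg l p = l + p (firstSeg l p) ∧
      edgeConnAux l n fun j => p (j + firstSeg l p)

/-- `λ` is edge `l`-connected. -/
def EdgeLConnected (l : ℕ) (p : ℕ → ℕ) : Prop := edgeConnAux l (plen p) p

/-- the node `(i+1, λ_{i+1})` (in row `i+1`, 1-indexed) is a removable node. -/
def Removable (p : ℕ → ℕ) (i : ℕ) : Prop := p (i + 1) < p i

/-- removal of the removable node in row `i+1`. -/
def removeNode (p : ℕ → ℕ) (i : ℕ) : ℕ → ℕ := fun k => if k = i then p i - 1 else p k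

/-- there is an addable node `(i+1, λ_{i+1} + 1)` in row `i+1` (1-indexed). -/
def Addable (p : ℕ → ℕ) (i : ℕ) : Prop := i ≤ plen p ∧ (i = 0 ∨ p i < p (i - 1))

/-- the removable node in row `i+1` is suitable: its residue (mod `l`) differs from the
residue of every lower addable node. -/
def Suitable (l : ℕ) (p : ℕ → ℕ) (i : ℕ) : Prop :=
  Removable p i ∧ ∀ j, i < j → Addable p j →
    ¬ ((p j : ℤ) - (j : ℤ) ≡ (p i : ℤ) - (i : ℤ) - 1 [ZMOD (l : ℤ)])

/-- the removable node in row `i+1` is co-suitable: its transpose node is a suitable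
node of the transpose partition. -/
def CoSuitable (l : ℕ) (p : ℕ → ℕ) (i : ℕ) : Prop :=
  Removable p i ∧ Suitable l (conjP p) (p i - 1)

/-- `Φ_m`: partitions with at most `m` parts and `λ_1 - λ_m ≤ l - m`. -/
def Phi (l m : ℕ) : Set (ℕ → ℕ) :=
  {p | IsPartition p ∧ plen p ≤ m ∧ p 0 - p (m - 1) ≤ l - m}

/-- `λ` is `m`-distinguished: `λ = λ⁰ + lλ̄` with
`λ⁰ = ((l-m)^k, a_1, …, a_m)`, `l - m > a_1 ≥ … ≥ a_m ≥ 0`, and `λ̄` a partition with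
`λ̄_1 ≤ m - 1`. -/
def IsDistinguished (l m : ℕ) (p : ℕ → ℕ) : Prop :=
  ∃ (k : ℕ) (a : ℕ → ℕ) (pb : ℕ → ℕ),
    IsPartition pb ∧ pb 0 < m ∧
    (∀ i j, i ≤ j → a j ≤ a i) ∧ a 0 < l - m ∧ (∀ i, m ≤ i → a i = 0) ∧
    ∀ i, p i = (if i < k then l - m else a (i - k)) + l * pb i

/-- `q` is obtained from `p` by removing a skew `l`-hook (spanning rows `a+1, …, b+1`,
1-indexed). -/
def IsHookRemoval (l : ℕ) (p q : ℕ → ℕ) : Prop :=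
  IsPartition q ∧ ∃ a b : ℕ, a ≤ b ∧
    (∀ i, i < a → q i = p i) ∧
    (∀ i, a ≤ i → i < b → q i + 1 = p (i + 1)) ∧
    q b + l = p a + (b - a) ∧
    ∀ i, b < i → q i = p i

/-- `q` is the `l`-core of `p`: obtained by repeatedly removing skew `l`-hooks until
none remain. -/
def IsCoreOf (l : ℕ) (p q : ℕ → ℕ) : Prop :=
  Relation.ReflTransGen (fun x y => IsHookRemoval l x y) p q ∧ ∀ r, ¬ IsHookRemoval l q r

/-- the `l`-core of `p`. -/
def lCore (l : ℕ) (p : ℕ → ℕ) : ℕ → ℕ := Classical.epsilon (IsCoreOf l p)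


section Basics

variable {p q : ℕ → ℕ}

lemma IsPartition.mono (hp : IsPartition p) {i j : ℕ} (h : i ≤ j) : p j ≤ p i := hp.1 i j h

lemma plen_set_nonempty (hp : IsPartition p) : {N | p N = 0}.Nonempty := by
  obtain ⟨N, hN⟩ := hp.2
  exact ⟨N, hN N le_rfl⟩

lemma plen_spec (hp : IsPartition p) : p (plen p) = 0 :=
  Nat.sInf_mem (plen_set_nonempty hp)

lemma eq_zero_of_plen_le (hp : IsPartition p) {i : ℕ} (h : plen p ≤ i) : p i = 0 :=
  Nat.le_zero.mp ((plen_spec hp ▸ hp.mono h))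

lemma ne_zero_of_lt_plen {i : ℕ} (h : i < plen p) : p i ≠ 0 :=
  Nat.notMem_of_lt_sInf (s := {N | p N = 0}) h

lemma lt_plen_iff (hp : IsPartition p) {i : ℕ} : i < plen p ↔ p i ≠ 0 := by
  constructor
  · exact ne_zero_of_lt_plen
  · intro h
    by_contra hle
    exact h (eq_zero_of_plen_le hp (le_of_not_gt hle))

lemma plen_le_of_zero {K : ℕ} (h : p K = 0) : plen p ≤ K := Nat.sInf_le h

lemma plen_eq_of (hp : IsPartition p) {K : ℕ} (h0 : p K = 0) (h1 : ∀ i, i < K → p i ≠ 0) :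
    plen p = K := by
  refine le_antisymm (plen_le_of_zero h0) ?_
  by_contra hlt
  exact h1 _ (lt_of_not_ge hlt) (plen_spec hp)

lemma plen_pos (hp : IsPartition p) (hne : p 0 ≠ 0) : 1 ≤ plen p :=
  (lt_plen_iff hp).mpr hne

lemma plen_le_plen (hp : IsPartition p) (hle : ∀ i, q i ≤ p i) : plen q ≤ plen p :=
  plen_le_of_zero (Nat.le_zero.mp (plen_spec hp ▸ hle (plen p)))

lemma pdeg_eq_sum (hq : IsPartition q) {K : ℕ} (h : plen q ≤ K) :
    pdeg q = ∑ i ∈ Finset.range K, q i := by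
  rw [pdeg]
  refine Finset.sum_subset (by simpa using h) ?_
  intro x hx hnx
  simp only [Finset.mem_range] at hx hnx
  exact eq_zero_of_plen_le hq (le_of_not_gt hnx)

end Basics
section Beta

/-- beta numbers with `N` beads -/
def bta (N : ℕ) (q : ℕ → ℕ) (i : ℕ) : ℕ := q i + (N - 1 - i)

/-- the beta set with `N` beads -/
def Bset (N : ℕ) (q : ℕ → ℕ) : Finset ℕ := (Finset.range N).image (bta N q)

lemma bta_anti {N : ℕ} {q : ℕ → ℕ} (hq : IsPartition q) {i j : ℕ} (hij : i < j) (hj : j < N) :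
    bta N q j < bta N q i := by
  have := hq.mono hij.le
  unfold bta
  omega

lemma bta_mem {N : ℕ} {q : ℕ → ℕ} {i : ℕ} (hi : i < N) : bta N q i ∈ Bset N q :=
  Finset.mem_image.mpr ⟨i, Finset.mem_range.mpr hi, rfl⟩

lemma hook_move {l N : ℕ} (hl : 2 ≤ l) {y r : ℕ → ℕ} (hy : IsPartition y) (hyN : plen y ≤ N)
    (h : IsHookRemoval l y r) :
    (∀ i, r i ≤ y i) ∧ ((∑ i ∈ Finset.range N, r i) + l = ∑ i ∈ Finset.range N, y i) ∧
    ∃ a, a < N ∧ l ≤ bta N y a ∧ (bta N y a - l ∉ Bset N y) ∧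
      ∀ x ∈ Bset N y, x ≠ bta N y a → x ∈ Bset N r := by
  obtain ⟨hr, a, b, hab, h1, h2, h3, h4⟩ := h
  have hyb : 1 ≤ y b := by
    rcases eq_or_lt_of_le hab with rfl | hab'
    · omega
    · have := h2 (b - 1) (by omega) (by omega)
      have hb1 : b - 1 + 1 = b := by omega
      rw [hb1] at this
      omega
  have hbplen : b < plen y := (lt_plen_iff hy).mpr (by omega)
  have hbN : b < N := lt_of_lt_of_le hbplen hyN
  have haN : a < N := lt_of_le_of_lt hab hbN
  have hrb : r b < y b := by
    rcases eq_or_lt_of_le hab with rfl | hab'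
    · omega
    · have := hr.mono (show b - 1 ≤ b by omega)
      have h2' := h2 (b - 1) (by omega) (by omega)
      have hb1 : b - 1 + 1 = b := by omega
      rw [hb1] at h2'
      omega
  have rleq : ∀ i, r i ≤ y i := by
    intro i
    rcases lt_trichotomy i a with hia | rfl | hia
    · exact (h1 i hia).le
    · rcases eq_or_lt_of_le hab with rfl | hab'
      · omega
      · have := h2 i le_rfl hab'
        have := hy.mono (show i ≤ i + 1 by omega)
        omega
    · rcases lt_trichotomy i b with hib | rfl | hib
      · have := h2 i (by omega) hib
        have := hy.mono (show i ≤ i + 1 by omega)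
        omega
      · exact hrb.le
      · exact (h4 i hib).le
  refine ⟨rleq, ?_, a, haN, ?_, ?_, ?_⟩
  · -- sum identity
    have split : ∀ f : ℕ → ℕ, ∑ i ∈ Finset.range N, f i =
        (∑ i ∈ Finset.Ico 0 a, f i) + (∑ i ∈ Finset.Ico a (b+1), f i) +
        (∑ i ∈ Finset.Ico (b+1) N, f i) := by
      intro f
      rw [Finset.range_eq_Ico,
        ← Finset.sum_Ico_consecutive f (show (0:ℕ) ≤ b + 1 by omega) (show b + 1 ≤ N by omega),
        ← Finset.sum_Ico_consecutive f (Nat.zero_le a) (show a ≤ b + 1 by omega)]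
    rw [split r, split y]
    have e1 : ∑ i ∈ Finset.Ico 0 a, r i = ∑ i ∈ Finset.Ico 0 a, y i :=
      Finset.sum_congr rfl fun i hi => h1 i (Finset.mem_Ico.mp hi).2
    have e3 : ∑ i ∈ Finset.Ico (b+1) N, r i = ∑ i ∈ Finset.Ico (b+1) N, y i :=
      Finset.sum_congr rfl fun i hi => h4 i (Finset.mem_Ico.mp hi).1
    have e2 : (∑ i ∈ Finset.Ico a (b+1), r i) + l = ∑ i ∈ Finset.Ico a (b+1), y i := by
      have ha : ∑ i ∈ Finset.Ico a (b+1), y i = y a + ∑ i ∈ Finset.Ico (a+1) (b+1), y i :=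
        Finset.sum_eq_sum_Ico_succ_bot (by omega) y
      have hb : ∑ i ∈ Finset.Ico a (b+1), r i = (∑ i ∈ Finset.Ico a b, r i) + r b :=
        Finset.sum_Ico_succ_top hab r
      have hmid : (∑ i ∈ Finset.Ico a b, r i) + (b - a) = ∑ i ∈ Finset.Ico (a+1) (b+1), y i := by
        have key : ∑ i ∈ Finset.Ico a b, (r i + 1) = ∑ i ∈ Finset.Ico (a+1) (b+1), y i := by
          rw [Finset.sum_Ico_eq_sum_range, Finset.sum_Ico_eq_sum_range]
          have hc : b + 1 - (a + 1) = b - a := by omega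
          rw [hc]
          refine Finset.sum_congr rfl fun i hi => ?_
          have hib : i < b - a := Finset.mem_range.mp hi
          have he : a + 1 + i = a + i + 1 := by omega
          rw [he]
          exact h2 (a + i) (by omega) (by omega)
        rw [Finset.sum_add_distrib, Finset.sum_const, smul_eq_mul, mul_one,
          Nat.card_Ico] at key
        omega
      omega
    omega
  · -- l ≤ bta N y a
    unfold bta
    omega
  · -- not mem
    intro hmem
    obtain ⟨j, hj, hjeq⟩ := Finset.mem_image.mp hmem
    have hjN := Finset.mem_range.mp hj
    rcases le_or_gt j b with hjb | hjb
    · have hge : bta N y b ≤ bta N y j := by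
        rcases eq_or_lt_of_le hjb with heq | hjb'
        · rw [heq]
        · exact (bta_anti hy hjb' hbN).le
      unfold bta at hjeq hge
      omega
    · have hry : r j = y j := h4 j hjb
      have hanti : bta N r j < bta N r b := bta_anti hr hjb hjN
      unfold bta at hjeq hanti
      rw [hry] at hanti
      omega
  · -- membership preservation
    intro x hx hxa
    obtain ⟨j, hj, rfl⟩ := Finset.mem_image.mp hx
    have hjN := Finset.mem_range.mp hj
    have hja : j ≠ a := fun hc => hxa (by rw [hc])
    rcases lt_trichotomy j a with hlt | heq | hgt
    · have : bta N r j = bta N y j := by unfold bta; rw [h1 j hlt]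
      exact this ▸ bta_mem hjN
    · exact absurd heq hja
    · rcases le_or_gt j b with hjb | hjb
      · have h2' := h2 (j - 1) (by omega) (by omega)
        have hj1 : j - 1 + 1 = j := by omega
        rw [hj1] at h2'
        have : bta N r (j - 1) = bta N y j := by
          unfold bta
          omega
        exact this ▸ bta_mem (by omega)
      · have : bta N r j = bta N y j := by unfold bta; rw [h4 j hjb]
        exact this ▸ bta_mem hjN

end Beta
section Core

lemma exists_core_aux {l : ℕ} (hl : 2 ≤ l) (N : ℕ) (p : ℕ → ℕ) (hp : IsPartition p)
    (hpN : plen p ≤ N) :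
    ∀ n (y : ℕ → ℕ), IsPartition y → (∀ i, y i ≤ p i) → (∑ i ∈ Finset.range N, y i) ≤ n →
      ∃ q, IsCoreOf l y q := by
  intro n
  induction n with
  | zero =>
    intro y hy hyle hsum
    by_cases hex : ∃ r, IsHookRemoval l y r
    · obtain ⟨r, hr⟩ := hex
      obtain ⟨-, hsumeq, -⟩ := hook_move hl hy (le_trans (plen_le_plen hp hyle) hpN) hr
      omega
    · push_neg at hex
      exact ⟨y, Relation.ReflTransGen.refl, hex⟩
  | succ n ih =>
    intro y hy hyle hsum
    by_cases hex : ∃ r, IsHookRemoval l y r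
    · obtain ⟨r, hr⟩ := hex
      obtain ⟨rleq, hsumeq, -⟩ := hook_move hl hy (le_trans (plen_le_plen hp hyle) hpN) hr
      obtain ⟨q, hq1, hq2⟩ := ih r hr.1 (fun i => le_trans (rleq i) (hyle i)) (by omega)
      exact ⟨q, Relation.ReflTransGen.head hr hq1, hq2⟩
    · push_neg at hex
      exact ⟨y, Relation.ReflTransGen.refl, hex⟩

lemma core_keeps {l : ℕ} (hl : 2 ≤ l) (p : ℕ → ℕ) (hp : IsPartition p) (hne : p 0 ≠ 0)
    (hfull : ∀ x, x ≤ p 0 + (plen p - 1) → x % l = (p 0 + (plen p - 1)) % l →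
      x ∈ Bset (plen p) p) :
    lCore l p 0 = p 0 := by
  set N := plen p with hN
  set M := p 0 + (N - 1) with hM
  have hcore_ex : ∃ q, IsCoreOf l p q :=
    exists_core_aux hl N p hp le_rfl (∑ i ∈ Finset.range N, p i) p hp (fun i => le_rfl) le_rfl
  have hspec : IsCoreOf l p (lCore l p) := Classical.epsilon_spec hcore_ex
  obtain ⟨hchain, -⟩ := hspec
  have inv : ∀ y, Relation.ReflTransGen (fun x y => IsHookRemoval l x y) p y →
      IsPartition y ∧ (∀ i, y i ≤ p i) ∧
      ∀ x, x ≤ M → x % l = M % l → x ∈ Bset N y := by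
    intro y hy
    induction hy with
    | refl => exact ⟨hp, fun i => le_rfl, fun x h1 h2 => hfull x h1 h2⟩
    | @tail y' r hc hstep ih =>
      obtain ⟨hyp, hyle, hyfull⟩ := ih
      obtain ⟨rleq, -, a, haN, hla, hnot, hkeep⟩ :=
        hook_move hl hyp (plen_le_plen hp hyle) hstep
      refine ⟨hstep.1, fun i => le_trans (rleq i) (hyle i), ?_⟩
      intro x hx hxmod
      have hxy := hyfull x hx hxmod
      refine hkeep x hxy ?_
      intro heq
      have hbm : bta N y' a ≤ M := by
        have h1 : y' a ≤ p a := hyle a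
        have h2 : p a ≤ p 0 := hp.mono (Nat.zero_le a)
        unfold bta
        omega
      have hmodb : (bta N y' a - l) % l = M % l := by
        have h1 : (bta N y' a - l + l) % l = (bta N y' a - l) % l := Nat.add_mod_right _ _
        have h2 : bta N y' a - l + l = bta N y' a := Nat.sub_add_cancel hla
        rw [h2] at h1
        rw [← h1, ← heq, hxmod]
      exact hnot (hyfull _ (le_trans (Nat.sub_le _ _) hbm) hmodb)
  obtain ⟨hqpart, hqle, hqfull⟩ := inv _ hchain
  have hMmem : M ∈ Bset N (lCore l p) := hqfull M le_rfl rfl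
  obtain ⟨i, hi, hieq⟩ := Finset.mem_image.mp hMmem
  have h1 : lCore l p i ≤ lCore l p 0 := hqpart.mono (Nat.zero_le i)
  have h0 : lCore l p 0 ≤ p 0 := hqle 0
  have hN1 : 1 ≤ N := plen_pos hp hne
  have hiN : i < N := Finset.mem_range.mp hi
  unfold bta at hieq
  omega

end Core
section Edge

variable {l : ℕ} {p : ℕ → ℕ}

lemma firstSeg_mem (hp : IsPartition p) :
    1 ≤ firstSeg l p ∧ l ≤ p 0 - p (firstSeg l p) + firstSeg l p := by
  have : (l + plen p + 1) ∈ {h | 1 ≤ h ∧ l ≤ p 0 - p h + h} := by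
    constructor
    · omega
    · rw [eq_zero_of_plen_le hp (i := l + plen p + 1) (by omega)]
      omega
  exact Nat.sInf_mem ⟨_, this⟩

lemma firstSeg_min {h' : ℕ} (hlt : h' < firstSeg l p) : ¬(1 ≤ h' ∧ l ≤ p 0 - p h' + h') :=
  Nat.notMem_of_lt_sInf (s := {h | 1 ≤ h ∧ l ≤ p 0 - p h + h}) hlt

lemma firstSeg_le_plen (hp : IsPartition p) (hne : p 0 ≠ 0) (he : l < p 0 + plen p - 1) :
    firstSeg l p ≤ plen p := by
  refine Nat.sInf_le ⟨plen_pos hp hne, ?_⟩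
  rw [plen_spec hp]
  omega

lemma shift_partition (hp : IsPartition p) (h : ℕ) : IsPartition (fun j => p (j + h)) := by
  obtain ⟨N, hN⟩ := hp.2
  exact ⟨fun i j hij => hp.1 _ _ (by omega), ⟨N, fun i hi => hN _ (by omega)⟩⟩

lemma plen_shift (hp : IsPartition p) {h : ℕ} (hh : h ≤ plen p) :
    plen (fun j => p (j + h)) = plen p - h := by
  refine plen_eq_of (shift_partition hp h) ?_ ?_
  · show p (plen p - h + h) = 0
    rw [show plen p - h + h = plen p by omega]
    exact plen_spec hp
  · intro i hi
    exact ne_zero_of_lt_plen (p := p) (by omega)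

lemma removeLEdgeAux_zero (n : ℕ) (h0 : p 0 = 0) : removeLEdgeAux l n p = fun _ => 0 := by
  cases n with
  | zero => rfl
  | succ n => simp [removeLEdgeAux, h0]

lemma rle_le : ∀ n (p : ℕ → ℕ), IsPartition p → ∀ i, removeLEdgeAux l n p i ≤ p i := by
  intro n
  induction n with
  | zero => intro p hp i; simp [removeLEdgeAux]
  | succ n ih =>
    intro p hp i
    have hmono1 : p (i + 1) ≤ p i := hp.mono (by omega)
    simp only [removeLEdgeAux]
    by_cases h0 : p 0 = 0
    · rw [if_pos h0]
      exact Nat.zero_le _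
    · rw [if_neg h0]
      by_cases hel : p 0 + plen p - 1 ≤ l
      · rw [if_pos hel]
        beta_reduce
        omega
      · rw [if_neg hel]
        beta_reduce
        have hfs := (firstSeg_mem (l := l) hp).1
        by_cases c1 : i + 1 < firstSeg l p
        · rw [if_pos c1]; omega
        · rw [if_neg c1]
          by_cases c2 : i + 1 = firstSeg l p
          · rw [if_pos c2]
            rcases Nat.lt_or_ge 1 (firstSeg l p) with hfs2 | hfs2
            · have hmin := firstSeg_min (p := p) (l := l) (h' := firstSeg l p - 1) (by omega)
              push_neg at hmin
              have hm := hmin (by omega)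
              have hm2 : p (firstSeg l p - 1) ≤ p 0 := hp.mono (by omega)
              have hie : firstSeg l p - 1 = i := by omega
              rw [hie] at hm hm2
              omega
            · have hi0 : i = 0 := by omega
              subst hi0
              omega
          · rw [if_neg c2]
            have hge : firstSeg l p ≤ i := by omega
            have := ih (fun j => p (j + firstSeg l p)) (shift_partition hp _) (i - firstSeg l p)
            beta_reduce at this
            rw [show i - firstSeg l p + firstSeg l p = i by omega] at this
            exact this

lemma rle_head (hl : 2 ≤ l) : ∀ n (p : ℕ → ℕ), IsPartition p →
    removeLEdgeAux l n p 0 = 0 ∨ removeLEdgeAux l n p 0 + 1 ≤ p 1 ∨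
      removeLEdgeAux l n p 0 + l ≤ p 0 := by
  intro n p hp
  cases n with
  | zero => left; rfl
  | succ n =>
    simp only [removeLEdgeAux]
    by_cases h0 : p 0 = 0
    · rw [if_pos h0]; left; rfl
    · rw [if_neg h0]
      by_cases hel : p 0 + plen p - 1 ≤ l
      · rw [if_pos hel]
        beta_reduce
        simp only [Nat.zero_add]
        rcases Nat.eq_zero_or_pos (p 1) with h1 | h1
        · left; omega
        · right; left; omega
      · rw [if_neg hel]
        beta_reduce
        simp only [Nat.zero_add]
        have hfs := (firstSeg_mem (l := l) hp).1
        by_cases c1 : 0 + 1 < firstSeg l p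
        · rw [if_pos c1]
          rcases Nat.eq_zero_or_pos (p 1) with h1 | h1
          · left; omega
          · right; left; omega
        · rw [if_neg c1]
          have c2 : 0 + 1 = firstSeg l p := by omega
          rw [if_pos c2]
          rcases Nat.lt_or_ge (p 0) l with hc | hc
          · left; omega
          · right; right; omega

lemma rle_partition (hl : 2 ≤ l) : ∀ n (p : ℕ → ℕ), IsPartition p →
    IsPartition (removeLEdgeAux l n p) := by
  intro n
  induction n with
  | zero => intro p hp; exact ⟨fun i j _ => le_rfl, ⟨0, fun i _ => rfl⟩⟩
  | succ n ih =>
    intro p hp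
    constructor
    · have adj : ∀ i, removeLEdgeAux l (n+1) p (i+1) ≤ removeLEdgeAux l (n+1) p i := by
        intro i
        simp only [removeLEdgeAux]
        by_cases h0 : p 0 = 0
        · rw [if_pos h0]
        · rw [if_neg h0]
          by_cases hel : p 0 + plen p - 1 ≤ l
          · rw [if_pos hel]
            beta_reduce
            have := hp.mono (show i + 1 ≤ i + 1 + 1 by omega)
            omega
          · rw [if_neg hel]
            beta_reduce
            have hfs := (firstSeg_mem (l := l) hp).1
            have hmem := (firstSeg_mem (l := l) hp).2
            have hp0le : p (firstSeg l p) ≤ p 0 := hp.mono (by omega)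
            rcases lt_trichotomy (i + 1 + 1) (firstSeg l p) with c1 | c1 | c1
            · rw [if_pos c1, if_pos (show i + 1 < firstSeg l p by omega)]
              have := hp.mono (show i + 1 ≤ i + 1 + 1 by omega)
              omega
            · rw [if_neg (by omega), if_pos c1, if_pos (show i + 1 < firstSeg l p by omega)]
              have hmin := firstSeg_min (p := p) (l := l) (h' := firstSeg l p - 1) (by omega)
              push_neg at hmin
              have hm := hmin (by omega)
              have hm2 : p (firstSeg l p - 1) ≤ p 0 := hp.mono (by omega)
              have hie : firstSeg l p - 1 = i + 1 := by omega
              rw [hie] at hm hm2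
              omega
            · rw [if_neg (by omega), if_neg (by omega)]
              rcases lt_trichotomy (i + 1) (firstSeg l p) with c2 | c2 | c2
              · omega
              · rw [if_neg (by omega), if_pos c2]
                rw [show i + 1 - firstSeg l p = 0 by omega]
                rcases rle_head hl n (fun j => p (j + firstSeg l p)) (shift_partition hp _)
                  with hh | hh | hh
                · beta_reduce at hh
                  rw [hh]
                  omega
                · beta_reduce at hh
                  have : p (1 + firstSeg l p) ≤ p (firstSeg l p) := hp.mono (by omega)
                  omega
                · beta_reduce at hh
                  simp only [Nat.zero_add] at hh
                  omega
              · rw [if_neg (by omega), if_neg (by omega)]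
                have := (ih (fun j => p (j + firstSeg l p)) (shift_partition hp _)).mono
                  (show i - firstSeg l p ≤ i + 1 - firstSeg l p by omega)
                rw [show i + 1 - firstSeg l p = (i - firstSeg l p) + 1 by omega] at this ⊢
                exact this
      exact fun i j hij => antitone_nat_of_succ_le adj hij
    · obtain ⟨N, hN⟩ := hp.2
      exact ⟨N, fun i hi => Nat.le_zero.mp ((hN i hi) ▸ rle_le (n+1) p hp i)⟩

lemma rle_fuel (hl : 2 ≤ l) : ∀ n m (p : ℕ → ℕ), IsPartition p → plen p ≤ n → plen p ≤ m →
    removeLEdgeAux l n p = removeLEdgeAux l m p := by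
  intro n
  induction n with
  | zero =>
    intro m p hp hn hm
    have h0 : p 0 = 0 := by
      have := plen_spec hp
      rwa [show plen p = 0 by omega] at this
    rw [removeLEdgeAux_zero 0 h0, removeLEdgeAux_zero m h0]
  | succ n ih =>
    intro m p hp hn hm
    by_cases hp0 : p 0 = 0
    · rw [removeLEdgeAux_zero _ hp0, removeLEdgeAux_zero _ hp0]
    · have hplen1 : 1 ≤ plen p := plen_pos hp hp0
      cases m with
      | zero => omega
      | succ m' =>
        funext i
        simp only [removeLEdgeAux]
        rw [if_neg hp0, if_neg hp0]
        by_cases c1 : p 0 + plen p - 1 ≤ l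
        · rw [if_pos c1, if_pos c1]
        · rw [if_neg c1, if_neg c1]
          beta_reduce
          by_cases c2 : i + 1 < firstSeg l p
          · rw [if_pos c2, if_pos c2]
          · rw [if_neg c2, if_neg c2]
            by_cases c3 : i + 1 = firstSeg l p
            · rw [if_pos c3, if_pos c3]
            · rw [if_neg c3, if_neg c3]
              have hfs := (firstSeg_mem (l := l) hp).1
              have hp' := shift_partition hp (firstSeg l p)
              by_cases hph : p (firstSeg l p) = 0
              · have hz : (fun j => p (j + firstSeg l p)) 0 = 0 := by simpa using hph
                rw [removeLEdgeAux_zero _ hz, removeLEdgeAux_zero _ hz]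
              · have hlt : firstSeg l p < plen p := (lt_plen_iff hp).mpr hph
                have hps : plen (fun j => p (j + firstSeg l p)) = plen p - firstSeg l p :=
                  plen_shift hp (by omega)
                rw [ih m' (fun j => p (j + firstSeg l p)) hp' (by omega) (by omega)]

end Edge
section Elen

variable {l : ℕ} {p : ℕ → ℕ}

lemma pdeg_removeLEdge (hl : 2 ≤ l) (hp : IsPartition p) :
    pdeg (removeLEdge l p) = ∑ i ∈ Finset.range (plen p), removeLEdge l p i :=
  pdeg_eq_sum (rle_partition hl _ p hp) (plen_le_plen hp (rle_le _ p hp))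

lemma elen_eq (hl : 2 ≤ l) (hp : IsPartition p) {c : ℕ}
    (htot : (∑ i ∈ Finset.range (plen p), removeLEdge l p i) + c =
      ∑ i ∈ Finset.range (plen p), p i) :
    elen l p = c := by
  simp only [elen]
  rw [pdeg_removeLEdge hl hp, show pdeg p = ∑ i ∈ Finset.range (plen p), p i from rfl]
  omega

lemma removeLEdge_small (hp : IsPartition p) (hne : p 0 ≠ 0) (he : p 0 + plen p - 1 ≤ l)
    (i : ℕ) : removeLEdge l p i = p (i + 1) - 1 := by
  rw [removeLEdge]
  obtain ⟨K, hK⟩ : ∃ K, plen p = K + 1 := ⟨plen p - 1, by have := plen_pos hp hne; omega⟩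
  rw [hK]
  simp only [removeLEdgeAux]
  rw [if_neg hne, if_pos he]

lemma removeLEdge_big (hp : IsPartition p) (hne : p 0 ≠ 0) (he : l < p 0 + plen p - 1) (i : ℕ) :
    removeLEdge l p i =
      if i + 1 < firstSeg l p then p (i + 1) - 1
      else if i + 1 = firstSeg l p then p 0 + firstSeg l p - 1 - l
      else removeLEdgeAux l (plen p - 1) (fun j => p (j + firstSeg l p)) (i - firstSeg l p) := by
  have hL : 1 ≤ plen p := plen_pos hp hne
  rw [removeLEdge]
  obtain ⟨K, hK⟩ : ∃ K, plen p = K + 1 := ⟨plen p - 1, by omega⟩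
  rw [hK, Nat.add_sub_cancel]
  simp only [removeLEdgeAux]
  rw [if_neg hne, if_neg (by omega)]

lemma elen_small (hl : 2 ≤ l) (hp : IsPartition p) (hne : p 0 ≠ 0)
    (he : p 0 + plen p - 1 ≤ l) : elen l p = p 0 + plen p - 1 := by
  have hL : 1 ≤ plen p := plen_pos hp hne
  have hL1 : plen p - 1 + 1 = plen p := by omega
  refine elen_eq hl hp ?_
  have s4 := Finset.sum_range_succ (removeLEdge l p) (plen p - 1)
  rw [hL1] at s4
  have s3 : removeLEdge l p (plen p - 1) = 0 := by
    rw [removeLEdge_small hp hne he, hL1, plen_spec hp]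
  have s1 : ∑ i ∈ Finset.range (plen p - 1), (removeLEdge l p i + 1) =
      ∑ i ∈ Finset.range (plen p - 1), p (i + 1) := by
    refine Finset.sum_congr rfl fun i hi => ?_
    have hi' := Finset.mem_range.mp hi
    have hnz : p (i + 1) ≠ 0 := ne_zero_of_lt_plen (by omega)
    rw [removeLEdge_small hp hne he]
    omega
  rw [Finset.sum_add_distrib, Finset.sum_const, Finset.card_range, smul_eq_mul, mul_one] at s1
  have s2 := Finset.sum_range_succ' p (plen p - 1)
  rw [hL1] at s2
  omega

lemma elen_deg (hl : 2 ≤ l) (hp : IsPartition p) (hne : p 0 ≠ 0)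
    (he : l < p 0 + plen p - 1) (hfs : firstSeg l p = plen p) : elen l p = l := by
  have hL : 1 ≤ plen p := plen_pos hp hne
  have hL1 : plen p - 1 + 1 = plen p := by omega
  refine elen_eq hl hp ?_
  have s4 := Finset.sum_range_succ (removeLEdge l p) (plen p - 1)
  rw [hL1] at s4
  have s3 : removeLEdge l p (plen p - 1) = p 0 + plen p - 1 - l := by
    rw [removeLEdge_big hp hne he, if_neg (by omega), if_pos (by omega), hfs]
  have s1 : ∑ i ∈ Finset.range (plen p - 1), (removeLEdge l p i + 1) =
      ∑ i ∈ Finset.range (plen p - 1), p (i + 1) := by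
    refine Finset.sum_congr rfl fun i hi => ?_
    have hi' := Finset.mem_range.mp hi
    have hnz : p (i + 1) ≠ 0 := ne_zero_of_lt_plen (by omega)
    rw [removeLEdge_big hp hne he, if_pos (by omega)]
    omega
  rw [Finset.sum_add_distrib, Finset.sum_const, Finset.card_range, smul_eq_mul, mul_one] at s1
  have s2 := Finset.sum_range_succ' p (plen p - 1)
  rw [hL1] at s2
  omega

lemma elen_step (hl : 2 ≤ l) (hp : IsPartition p) (hne : p 0 ≠ 0)
    (he : l < p 0 + plen p - 1) (hfs : firstSeg l p < plen p) :
    elen l p = l + elen l (fun j => p (j + firstSeg l p)) := by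
  have hL : 1 ≤ plen p := plen_pos hp hne
  have hh1 : 1 ≤ firstSeg l p := (firstSeg_mem hp).1
  have hmem : l ≤ p 0 - p (firstSeg l p) + firstSeg l p := (firstSeg_mem hp).2
  have hph : p (firstSeg l p) ≠ 0 := ne_zero_of_lt_plen hfs
  have hphle : p (firstSeg l p) ≤ p 0 := hp.mono (by omega)
  set h := firstSeg l p with hhdef
  set p' := fun j => p (j + h) with hp'def
  have hp' : IsPartition p' := shift_partition hp h
  have hps : plen p' = plen p - h := plen_shift hp (by omega)
  have hfuel : removeLEdgeAux l (plen p - 1) p' = removeLEdge l p' := by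
    rw [removeLEdge]
    exact rle_fuel hl (plen p - 1) (plen p') p' hp' (by omega) le_rfl
  refine elen_eq hl hp ?_
  have hh0 : h - 1 + 1 = h := by omega
  -- split the sums at h
  have T1 : ∀ f : ℕ → ℕ, ∑ i ∈ Finset.range (plen p), f i =
      (∑ i ∈ Finset.range h, f i) + ∑ i ∈ Finset.Ico h (plen p), f i := by
    intro f
    rw [Finset.range_eq_Ico, ← Finset.sum_Ico_consecutive f (Nat.zero_le h) (le_of_lt hfs),
      Finset.range_eq_Ico]
  rw [T1 (removeLEdge l p), T1 p]
  have T2 := Finset.sum_range_succ (removeLEdge l p) (h - 1)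
  rw [hh0] at T2
  have T3 : removeLEdge l p (h - 1) = p 0 + h - 1 - l := by
    rw [removeLEdge_big hp hne he, if_neg (by omega), if_pos (by omega)]
  have T4 : ∑ i ∈ Finset.range (h - 1), (removeLEdge l p i + 1) =
      ∑ i ∈ Finset.range (h - 1), p (i + 1) := by
    refine Finset.sum_congr rfl fun i hi => ?_
    have hi' := Finset.mem_range.mp hi
    have hnz : p (i + 1) ≠ 0 := ne_zero_of_lt_plen (by omega)
    rw [removeLEdge_big hp hne he, if_pos (by omega)]
    omega
  rw [Finset.sum_add_distrib, Finset.sum_const, Finset.card_range, smul_eq_mul, mul_one] at T4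
  have T5 := Finset.sum_range_succ' p (h - 1)
  rw [hh0] at T5
  have T6 : ∑ i ∈ Finset.Ico h (plen p), removeLEdge l p i =
      ∑ i ∈ Finset.range (plen p - h), removeLEdge l p' i := by
    rw [Finset.sum_Ico_eq_sum_range]
    refine Finset.sum_congr rfl fun i hi => ?_
    rw [removeLEdge_big hp hne he, if_neg (by omega), if_neg (by omega), hfuel]
    congr 1
    omega
  have T7 : ∑ i ∈ Finset.Ico h (plen p), p i = ∑ i ∈ Finset.range (plen p - h), p' i := by
    rw [Finset.sum_Ico_eq_sum_range]
    refine Finset.sum_congr rfl fun i hi => ?_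
    show p (h + i) = p (i + h)
    congr 1
    omega
  have T8 : (∑ i ∈ Finset.range (plen p - h), removeLEdge l p' i) + elen l p' =
      ∑ i ∈ Finset.range (plen p - h), p' i := by
    have hle : (∑ i ∈ Finset.range (plen p - h), removeLEdge l p' i) ≤
        ∑ i ∈ Finset.range (plen p - h), p' i :=
      Finset.sum_le_sum fun i _ => rle_le (plen p') p' hp' i
    have helen' : elen l p' = (∑ i ∈ Finset.range (plen p - h), p' i) -
        ∑ i ∈ Finset.range (plen p - h), removeLEdge l p' i := by
      simp only [elen]
      rw [pdeg_removeLEdge hl hp', show pdeg p' = ∑ i ∈ Finset.range (plen p'), p' i from rfl,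
        hps]
    omega
  rw [T6, T7]
  omega

end Elen
section Main

lemma runner_full {l : ℕ} (hl : 2 ≤ l) :
    ∀ m (p : ℕ → ℕ), IsPartition p → p 0 ≠ 0 → plen p ≤ m → edgeConnAux l m p →
      ¬ l ∣ elen l p → ∀ x, x ≤ p 0 + (plen p - 1) → x % l = (p 0 + (plen p - 1)) % l →
      ∃ i, i < plen p ∧ p i + (plen p - 1 - i) = x := by
  intro m
  induction m with
  | zero =>
    intro p hp hne h0 _ _
    have := plen_pos hp hne
    omega
  | succ m ih =>
    intro p hp hne hpm hconn hnd x hx hmod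
    have hL : 1 ≤ plen p := plen_pos hp hne
    by_cases helen : elen l p ≤ l
    · -- terminal case
      by_cases he : p 0 + plen p - 1 ≤ l
      · have heq := elen_small hl hp hne he
        have hel : p 0 + plen p - 1 < l := by
          rcases lt_or_eq_of_le he with h | h
          · exact h
          · exact absurd (by rw [heq, h] : l ∣ elen l p) hnd
        have hM : p 0 + (plen p - 1) < l := by omega
        have hMx : (p 0 + (plen p - 1)) % l = p 0 + (plen p - 1) := Nat.mod_eq_of_lt hM
        have hxx : x % l = x := Nat.mod_eq_of_lt (by omega)
        refine ⟨0, by omega, ?_⟩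
        rw [Nat.sub_zero]
        omega
      · exfalso
        have he' : l < p 0 + plen p - 1 := by omega
        have hfsle : firstSeg l p ≤ plen p := firstSeg_le_plen hp hne he'
        rcases eq_or_lt_of_le hfsle with heq | hlt
        · refine absurd ?_ hnd
          rw [elen_deg hl hp hne he' heq]
        · have hstep := elen_step hl hp hne he' hlt
          have : elen l (fun j => p (j + firstSeg l p)) = 0 := by omega
          rw [this] at hstep
          refine absurd ?_ hnd
          rw [hstep]
          exact dvd_add dvd_rfl (dvd_zero l)
    · -- recursive case
      have hconn' : p 0 + firstSeg l p = l + p (firstSeg l p) ∧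
          edgeConnAux l m (fun j => p (j + firstSeg l p)) := by
        simp only [edgeConnAux] at hconn
        rwa [if_neg helen] at hconn
      obtain ⟨heq, hconn2⟩ := hconn'
      have he' : l < p 0 + plen p - 1 := by
        by_contra hc
        push_neg at hc
        have := elen_small hl hp hne hc
        omega
      have hfsle : firstSeg l p ≤ plen p := firstSeg_le_plen hp hne he'
      have hh1 : 1 ≤ firstSeg l p := (firstSeg_mem hp).1
      rcases eq_or_lt_of_le hfsle with heqL | hltL
      · exact absurd (elen_deg hl hp hne he' heqL) (by omega)
      · have hph : p (firstSeg l p) ≠ 0 := ne_zero_of_lt_plen hltL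
        have hp' : IsPartition (fun j => p (j + firstSeg l p)) := shift_partition hp _
        have hps : plen (fun j => p (j + firstSeg l p)) = plen p - firstSeg l p :=
          plen_shift hp (by omega)
        have hstep := elen_step hl hp hne he' hltL
        have hnd' : ¬ l ∣ elen l (fun j => p (j + firstSeg l p)) := by
          intro hd
          refine hnd ?_
          rw [hstep]
          exact Dvd.dvd.add dvd_rfl hd
        have hp'0 : (fun j => p (j + firstSeg l p)) 0 = p (firstSeg l p) := by
          beta_reduce
          rw [Nat.zero_add]
        have hMM : p 0 + (plen p - 1) =
            ((fun j => p (j + firstSeg l p)) 0 + (plen (fun j => p (j + firstSeg l p)) - 1)) + l := by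
          rw [hp'0, hps]
          omega
        rcases eq_or_lt_of_le hx with hxM | hxlt
        · exact ⟨0, by omega, by rw [Nat.sub_zero]; omega⟩
        · -- x < M, so x + l ≤ M
          have hdvd : l ∣ (p 0 + (plen p - 1) - x) := by
            exact (Nat.modEq_iff_dvd' (by omega)).mp hmod
          obtain ⟨k, hk⟩ := hdvd
          have hk1 : 1 ≤ k := by
            rcases Nat.eq_zero_or_pos k with h | h
            · rw [h, Nat.mul_zero] at hk
              omega
            · exact h
          have hxle : x + l ≤ p 0 + (plen p - 1) := by
            have : l * 1 ≤ l * k := Nat.mul_le_mul_left l hk1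
            omega
          have hx' : x ≤ (fun j => p (j + firstSeg l p)) 0 +
              (plen (fun j => p (j + firstSeg l p)) - 1) := by omega
          have hmod' : x % l = ((fun j => p (j + firstSeg l p)) 0 +
              (plen (fun j => p (j + firstSeg l p)) - 1)) % l := by
            rw [hmod, hMM, Nat.add_mod_right]
          obtain ⟨i, hi, hieq⟩ := ih (fun j => p (j + firstSeg l p)) hp'
            (by simpa using hph) (by omega) hconn2 hnd' x hx' hmod'
          refine ⟨firstSeg l p + i, by omega, ?_⟩
          beta_reduce at hieq
          rw [hps] at hi hieq
          rw [show i + firstSeg l p = firstSeg l p + i by omega] at hieq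
          rw [show plen p - 1 - (firstSeg l p + i) = plen p - firstSeg l p - 1 - i by omega]
          exact hieq

end Main

/-- Let `λ` be a nonzero edge `l`-connected partition with `l ∤ e_l(λ)`. Then the first
part of the `l`-core of `λ` equals the first part of `λ`. -/
theorem core_first_part (l : ℕ) (hl : 2 ≤ l) (p : ℕ → ℕ)
    (hp : IsPartition p) (hne : p 0 ≠ 0)
    (hconn : EdgeLConnected l p) (hndvd : ¬ l ∣ elen l p) :
    lCore l p 0 = p 0 := by
  have hfull : ∀ x, x ≤ p 0 + (plen p - 1) → x % l = (p 0 + (plen p - 1)) % l →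
      x ∈ Bset (plen p) p := by
    intro x hx hmod
    obtain ⟨i, hi, hieq⟩ := runner_full hl (plen p) p hp hne le_rfl hconn hndvd x hx hmod
    exact Finset.mem_image.mpr ⟨i, Finset.mem_range.mpr hi, hieq⟩
  exact core_keeps hl p hp hne hfull
end
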